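/- Unit propagation is preserved under restrictions: for every CNF Γ, every set of literals L, and every partial assignment α that does not satisfy any literal of L, if Γ ∧ ¬L has a unit propagation refutation, then Γ|α ∧ ¬(L|α) has a unit propagation refutation, where L|α = L \ { q : α(q) = 0 }. -/

import Mathlib

open Classical

abbrev Var := ℕ
abbrev Lit := Var × Bool

def negLit (l : Lit) : Lit := (l.1, !l.2)

abbrev Clause := Finset Lit

/-- A set of literals is tautological if it contains a complementary pair. -/
def Tauto (S : Finset Lit) : Prop := ∃ l ∈ S, negLit l ∈ S

abbrev CNF := Set Clause

abbrev Assign := Var → Bool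

def SatLit (α : Assign) (l : Lit) : Prop := α l.1 = l.2
def SatClause (α : Assign) (C : Clause) : Prop := ∃ l ∈ C, SatLit α l
def SatCNF (α : Assign) (Γ : CNF) : Prop := ∀ C ∈ Γ, SatClause α C
def Satisfiable (Γ : CNF) : Prop := ∃ α, SatCNF α Γ
def Equisat (Γ Δ : CNF) : Prop := Satisfiable Γ ↔ Satisfiable Δ

/-- `C` is a blocked clause for the literal `p` with respect to `Γ`. -/
def Blocked (C : Clause) (p : Lit) (Γ : CNF) : Prop :=
  p ∈ C ∧ ∀ D ∈ Γ, negLit p ∈ D → Tauto (C.erase p ∪ D.erase (negLit p))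

def negSet (L : Finset Lit) : Finset Lit := L.image negLit

/-- `C` is a set-blocked clause for `L` with respect to `Γ`. -/
def SetBlocked (C : Clause) (L : Finset Lit) (Γ : CNF) : Prop :=
  L.Nonempty ∧ L ⊆ C ∧
    ∀ D ∈ Γ, (D ∩ negSet L).Nonempty → D ∩ L = ∅ →
      Tauto ((C \ L) ∪ (D \ negSet L))

def varsClause (C : Clause) : Finset Var := C.image Prod.fst
def varsCNF (Γ : CNF) : Set Var := {v | ∃ C ∈ Γ, v ∈ varsClause C}

/-- Partial assignments. -/
abbrev PAssign := Var → Option Bool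

def restrictClause (α : PAssign) (C : Clause) : Clause :=
  C.filter fun l => α l.1 ≠ some (!l.2)

def PSatClause' (α : PAssign) (C : Clause) : Prop := ∃ l ∈ C, α l.1 = some l.2

def restrictCNF (α : PAssign) (Γ : CNF) : CNF :=
  {E | ∃ C ∈ Γ, ¬ PSatClause' α C ∧ E = restrictClause α C}

/-- `E` is a resolvent of `F` and `G`. -/
def Resolvent (E F G : Clause) : Prop :=
  ∃ (x : Var) (A B : Clause), x ∉ varsClause A ∧ x ∉ varsClause B ∧
    F = insert (x, true) A ∧ G = insert (x, false) B ∧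
    E = A ∪ B ∧ ¬ Tauto (A ∪ B)

/-- One step of a resolution proof: add a resolvent or a weakening. -/
def ResStep (Γ Γ' : CNF) : Prop :=
  ∃ C, Γ' = Γ ∪ {C} ∧
    ((∃ F ∈ Γ, ∃ G ∈ Γ, Resolvent C F G) ∨ (∃ D ∈ Γ, D ⊆ C ∧ ¬ Tauto C))

/-- A resolution proof (refutation) of `Γ`. -/
def ResProofOf (Γ : CNF) (prf : List CNF) : Prop :=
  prf.head? = some Γ ∧ (∃ Δ, prf.getLast? = some Δ ∧ (∅ : Clause) ∈ Δ) ∧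
    List.Chain' ResStep prf

/-- One step of a unit propagation proof: resolve against a unit clause, or weaken. -/
def UnitStep (Γ Γ' : CNF) : Prop :=
  ∃ C, Γ' = Γ ∪ {C} ∧
    ((∃ l, ({negLit l} : Clause) ∈ Γ ∧ l.1 ∉ varsClause C ∧ insert l C ∈ Γ)
      ∨ (∃ D ∈ Γ, D ⊆ C ∧ ¬ Tauto C))

/-- `Γ` has a unit propagation refutation. -/
def UPRefutes (Γ : CNF) : Prop :=
  ∃ prf : List CNF, prf.head? = some Γ ∧ (∃ Δ, prf.getLast? = some Δ ∧ (∅ : Clause) ∈ Δ) ∧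
    List.Chain' UnitStep prf

def negUnits (L : Finset Lit) : CNF := {C | ∃ p ∈ L, C = {negLit p}}

/-- `Γ ⊢₁ C`. -/
def UPDerives (Γ : CNF) (C : Clause) : Prop := UPRefutes (Γ ∪ negUnits C)

/-- Partial assignments as consistent sets of literals. -/
def Consistent (α : Set Lit) : Prop := ∀ l ∈ α, negLit l ∉ α
def PSatClause (α : Set Lit) (C : Clause) : Prop := ∃ l ∈ C, l ∈ α
def PSatCNF (α : Set Lit) (Γ : CNF) : Prop := ∀ C ∈ Γ, PSatClause α C
def MinSat (α : Set Lit) (Γ : CNF) : Prop :=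
  Consistent α ∧ PSatCNF α Γ ∧ ∀ β ⊂ α, ¬ PSatCNF β Γ

/-- `μ(Γ)`: clauses whose negation minimally satisfies `Γ`. -/
def mu (Γ : CNF) : CNF := {E | MinSat (↑(E.image negLit)) Γ}

/-- Projection of `Γ` onto a literal. -/
def proj (p : Lit) (Γ : CNF) : CNF := {E | ∃ D ∈ Γ, p ∈ D ∧ E = D.erase p}


/-- Closure of a CNF under unit-propagation steps. -/
inductive UPcl (Γ : CNF) : Clause → Prop where
  | base {C : Clause} : C ∈ Γ → UPcl Γ C
  | unit {l : Lit} {C : Clause} : UPcl Γ {negLit l} → UPcl Γ (insert l C) →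
      l.1 ∉ varsClause C → UPcl Γ C
  | weak {D C : Clause} : UPcl Γ D → D ⊆ C → ¬ Tauto C → UPcl Γ C

lemma unitStep_subset {Γ Γ' : CNF} (h : UnitStep Γ Γ') : Γ ⊆ Γ' := by
  obtain ⟨C, rfl, -⟩ := h; exact Set.subset_union_left

lemma unitStep_mono {Γ Γ' E : CNF} (h : UnitStep Γ Γ') (hE : Γ ⊆ E) :
    UnitStep E (E ∪ Γ') := by
  obtain ⟨C, rfl, hc⟩ := h
  refine ⟨C, ?_, ?_⟩
  · rw [← Set.union_assoc, Set.union_eq_self_of_subset_right hE]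
  · rcases hc with ⟨l, h1, h2, h3⟩ | ⟨D, h1, h2, h3⟩
    · exact Or.inl ⟨l, hE h1, h2, hE h3⟩
    · exact Or.inr ⟨D, hE h1, h2, h3⟩

lemma reach_subset {Γ Δ : CNF} (h : Relation.ReflTransGen UnitStep Γ Δ) : Γ ⊆ Δ := by
  induction h with
  | refl => exact subset_rfl
  | tail _ h2 ih => exact ih.trans (unitStep_subset h2)

lemma reach_union {Γ Δ E : CNF} (h : Relation.ReflTransGen UnitStep Γ Δ) (hE : Γ ⊆ E) :
    Relation.ReflTransGen UnitStep E (E ∪ Δ) := by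
  induction h with
  | refl => rw [Set.union_eq_self_of_subset_right hE]
  | @tail b c h1 h2 ih =>
      have : UnitStep (E ∪ b) (E ∪ c) := by
        have h' := unitStep_mono h2 (Set.subset_union_right (s := E))
        rwa [Set.union_assoc, Set.union_eq_self_of_subset_left (unitStep_subset h2)] at h'
      exact ih.tail this

lemma upcl_reach {Γ : CNF} {C : Clause} (h : UPcl Γ C) :
    ∃ Δ, Relation.ReflTransGen UnitStep Γ Δ ∧ C ∈ Δ := by
  induction h with
  | base hC => exact ⟨Γ, Relation.ReflTransGen.refl, hC⟩
  | @unit l C _ _ hv ih1 ih2 =>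
      obtain ⟨Δ₁, hr1, hm1⟩ := ih1
      obtain ⟨Δ₂, hr2, hm2⟩ := ih2
      have hr3 : Relation.ReflTransGen UnitStep Δ₁ (Δ₁ ∪ Δ₂) :=
        reach_union hr2 (reach_subset hr1)
      refine ⟨Δ₁ ∪ Δ₂ ∪ {C}, (hr1.trans hr3).tail ?_, Or.inr rfl⟩
      exact ⟨C, rfl, Or.inl ⟨l, Or.inl hm1, hv, Or.inr hm2⟩⟩
  | @weak D C _ hsub ht ih =>
      obtain ⟨Δ, hr, hm⟩ := ih
      exact ⟨Δ ∪ {C}, hr.tail ⟨C, rfl, Or.inr ⟨D, hm, hsub, ht⟩⟩, Or.inr rfl⟩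

lemma reach_prf {Γ Δ : CNF} (h : Relation.ReflTransGen UnitStep Γ Δ) :
    ∃ prf : List CNF, prf.head? = some Γ ∧ prf.getLast? = some Δ ∧
      List.Chain' UnitStep prf := by
  induction h with
  | refl => exact ⟨[Γ], rfl, rfl, List.IsChain.singleton _⟩
  | @tail b c _ h2 ih =>
      obtain ⟨prf, h1', h2', h3'⟩ := ih
      refine ⟨prf ++ [c], ?_, ?_, ?_⟩
      · cases prf with
        | nil => simp at h1'
        | cons a t => simpa using h1'
      · simp
      · unfold List.Chain'; rw [List.isChain_append]
        refine ⟨h3', by simp, ?_⟩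
        intro x hx y hy
        rw [h2'] at hx
        simp at hx hy
        subst hx; subst hy; exact h2

lemma refutes_of_upcl {Γ : CNF} (h : UPcl Γ ∅) : UPRefutes Γ := by
  obtain ⟨Δ, hr, hm⟩ := upcl_reach h
  obtain ⟨prf, h1, h2, h3⟩ := reach_prf hr
  exact ⟨prf, h1, ⟨Δ, h2, hm⟩, h3⟩

lemma upcl_of_chain {Γ : CNF} :
    ∀ (prf : List CNF), List.Chain' UnitStep prf →
      ∀ Δ₀, prf.head? = some Δ₀ → (∀ C ∈ Δ₀, UPcl Γ C) →
      ∀ Δ, prf.getLast? = some Δ → ∀ C ∈ Δ, UPcl Γ C := by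
  intro prf
  induction prf with
  | nil => intro _ _ h; simp at h
  | cons a t ih =>
      intro hch Δ₀ hh h0 Δ hl
      simp at hh; subst hh
      cases t with
      | nil => simp at hl; subst hl; exact h0
      | cons b t' =>
          unfold List.Chain' at hch; rw [List.isChain_cons_cons] at hch
          obtain ⟨hab, hch'⟩ := hch
          have hb : ∀ C ∈ b, UPcl Γ C := by
            obtain ⟨C, rfl, hc⟩ := hab
            rintro E (hE | hE)
            · exact h0 E hE
            · simp at hE; subst hE
              rcases hc with ⟨l, h1, h2, h3⟩ | ⟨D, h1, h2, h3⟩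
              · exact UPcl.unit (h0 _ h1) (h0 _ h3) h2
              · exact UPcl.weak (h0 D h1) h2 h3
          have hl' : (b :: t').getLast? = some Δ := by
            rw [← hl]; simp [List.getLast?_cons_cons]
          exact ih hch' b rfl hb Δ hl'

lemma upcl_of_refutes {Γ : CNF} (h : UPRefutes Γ) : UPcl Γ ∅ := by
  obtain ⟨prf, h1, ⟨Δ, h2, h3⟩, h4⟩ := h
  exact upcl_of_chain prf h4 Γ h1 (fun C hC => UPcl.base hC) Δ h2 ∅ h3

lemma tauto_mono {S T : Finset Lit} (h : Tauto S) (hsub : S ⊆ T) : Tauto T := by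
  obtain ⟨l, h1, h2⟩ := h; exact ⟨l, hsub h1, hsub h2⟩

lemma varsClause_mono {C D : Clause} (h : C ⊆ D) : varsClause C ⊆ varsClause D :=
  Finset.image_subset_image h

lemma main_sim (Γ : CNF) (L : Finset Lit) (α : PAssign)
    (hα : ∀ p ∈ L, α p.1 ≠ some p.2) {C : Clause}
    (h : UPcl (Γ ∪ negUnits L) C) (hns : ¬ PSatClause' α C) :
    UPcl (restrictCNF α Γ ∪ negUnits (L.filter fun p => α p.1 ≠ some (!p.2))) ∅ ∨
    UPcl (restrictCNF α Γ ∪ negUnits (L.filter fun p => α p.1 ≠ some (!p.2)))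
      (restrictClause α C) := by
  set L' := L.filter fun p => α p.1 ≠ some (!p.2) with hL'
  set Γ' := restrictCNF α Γ ∪ negUnits L' with hΓ'
  induction h with
  | @base C hC =>
      rcases hC with hC | hC
      · exact Or.inr (UPcl.base (Or.inl ⟨C, hC, hns, rfl⟩))
      · obtain ⟨p, hp, rfl⟩ := hC
        have hps : α p.1 ≠ some (!p.2) := by
          intro hcon
          exact hns ⟨negLit p, Finset.mem_singleton_self _, hcon⟩
        have hrc : restrictClause α ({negLit p} : Clause) = {negLit p} := by
          unfold restrictClause
          rw [Finset.filter_singleton, if_pos]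
          simp [negLit]
          exact hα p hp
        rw [hrc]
        exact Or.inr (UPcl.base (Or.inr ⟨p, Finset.mem_filter.mpr ⟨hp, hps⟩, rfl⟩))
  | @unit l C hl hins hv ih1 ih2 =>
      by_cases h1 : α l.1 = some l.2
      · have hnl : ¬ PSatClause' α ({negLit l} : Clause) := by
          rintro ⟨m, hm, hms⟩
          simp [negLit] at hm; subst hm
          simp [negLit, h1] at hms
        rcases ih1 hnl with h | h
        · exact Or.inl h
        · have : restrictClause α ({negLit l} : Clause) = ∅ := by
            unfold restrictClause
            rw [Finset.filter_singleton, if_neg]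
            simp [negLit, h1]
          rw [this] at h
          exact Or.inl h
      · have hni : ¬ PSatClause' α (insert l C) := by
          rintro ⟨m, hm, hms⟩
          rcases Finset.mem_insert.mp hm with rfl | hm'
          · exact h1 hms
          · exact hns ⟨m, hm', hms⟩
        rcases ih2 hni with h | h
        · exact Or.inl h
        by_cases h2 : α l.1 = some (!l.2)
        · have : restrictClause α (insert l C) = restrictClause α C := by
            unfold restrictClause
            rw [Finset.filter_insert, if_neg]
            simp [h2]
          rw [this] at h
          exact Or.inr h
        · have heq : restrictClause α (insert l C) = insert l (restrictClause α C) := by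
            unfold restrictClause
            rw [Finset.filter_insert, if_pos h2]
          rw [heq] at h
          have hnl : ¬ PSatClause' α ({negLit l} : Clause) := by
            rintro ⟨m, hm, hms⟩
            simp [negLit] at hm; subst hm
            simp [negLit] at hms
            exact h2 hms
          rcases ih1 hnl with h' | h'
          · exact Or.inl h'
          · have hrl : restrictClause α ({negLit l} : Clause) = {negLit l} := by
              unfold restrictClause
              rw [Finset.filter_singleton, if_pos]
              simp [negLit]
              exact h1
            rw [hrl] at h'
            have hv' : l.1 ∉ varsClause (restrictClause α C) := fun hcon =>
              hv (varsClause_mono (Finset.filter_subset _ _) hcon)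
            exact Or.inr (UPcl.unit h' h hv')
  | @weak D C hD hsub ht ih =>
      have hnD : ¬ PSatClause' α D := fun ⟨m, hm, hms⟩ => hns ⟨m, hsub hm, hms⟩
      rcases ih hnD with h | h
      · exact Or.inl h
      · refine Or.inr (UPcl.weak h ?_ ?_)
        · exact Finset.filter_subset_filter _ hsub
        · intro hcon
          exact ht (tauto_mono hcon (Finset.filter_subset _ _))

/-- unit propagation is preserved under restrictions. -/
theorem unitPropagation_restriction (Γ : CNF) (L : Finset Lit) (α : PAssign)
    (hα : ∀ p ∈ L, α p.1 ≠ some p.2)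
    (h : UPRefutes (Γ ∪ negUnits L)) :
    UPRefutes (restrictCNF α Γ ∪ negUnits (L.filter fun p => α p.1 ≠ some (!p.2))) := by
  have h0 := upcl_of_refutes h
  have hns : ¬ PSatClause' α (∅ : Clause) := by rintro ⟨m, hm, -⟩; simp at hm
  rcases main_sim Γ L α hα h0 hns with h' | h'
  · exact refutes_of_upcl h'
  · have : restrictClause α (∅ : Clause) = ∅ := rfl
    rw [this] at h'
    exact refutes_of_upcl h'
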